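/- Let L > 0 and λ > 0, and let p : ℝ × ℝ → ℝ be a C³ function which on the triangle T = {(x,y) : 0 ≤ x ≤ L, x ≤ y ≤ L} satisfies p_{xxx} + p_{yyy} + p_x + p_y = λ p, p(x,x) = 0 and p_x(x,x) = (λ/3)·x for x ∈ [0,L], and p(0,y) = 0 for y ∈ [0,L]. Define F : ℝ × ℝ → ℝ by F(s,r) = p(L − r, L − s). Then F satisfies, on T: F_{sss} + F_{rrr} + F_s + F_r = −λ F; F(s,s) = 0 for s ∈ [0,L]; F_s(s,s) = (λ/3)(L − s) for s ∈ [0,L]; and F(s,L) = 0 for s ∈ [0,L]. -/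

import Mathlib

open Set

private lemma itd_const_sub (n : ℕ) (f : ℝ → ℝ) (a x : ℝ) :
    iteratedDeriv n (fun t => f (a - t)) x = (-1 : ℝ) ^ n * iteratedDeriv n f (a - x) := by
  induction n generalizing x with
  | zero => simp
  | succ n ih =>
    have ih' : iteratedDeriv n (fun t => f (a - t))
        = fun t => (-1 : ℝ) ^ n * iteratedDeriv n f (a - t) := funext fun t => ih t
    rw [iteratedDeriv_succ, ih', iteratedDeriv_succ]
    have h1 : deriv (fun t => (-1 : ℝ) ^ n * iteratedDeriv n f (a - t)) x
        = (-1 : ℝ) ^ n * deriv (fun t => iteratedDeriv n f (a - t)) x :=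
      deriv_const_mul_field _
    rw [h1, deriv_comp_const_sub]
    ring

/-- The change of variables `F(s,r) = p(L-r, L-s)` maps the observer kernel system for `p`
into the state-feedback kernel system (with the sign `-λ`): `F` satisfies
`F_sss + F_rrr + F_s + F_r = -λ F` on the triangle, `F(s,s) = 0`,
`F_s(s,s) = (λ/3)(L-s)`, and `F(s,L) = 0` for `s ∈ [0,L]`. -/
theorem observer_kernel_change_of_variables
    (L lam : ℝ) (hL : 0 < L) (hlam : 0 < lam)
    (p : ℝ → ℝ → ℝ) (hp : ContDiff ℝ 3 (Function.uncurry p))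
    (hppde : ∀ x y : ℝ, (x, y) ∈ {q : ℝ × ℝ | 0 ≤ q.1 ∧ q.1 ≤ L ∧ q.1 ≤ q.2 ∧ q.2 ≤ L} →
      iteratedDeriv 3 (fun s => p s y) x + iteratedDeriv 3 (fun r => p x r) y
        + deriv (fun s => p s y) x + deriv (fun r => p x r) y = lam * p x y)
    (hpdiag : ∀ x ∈ Set.Icc (0:ℝ) L, p x x = 0)
    (hpxdiag : ∀ x ∈ Set.Icc (0:ℝ) L, deriv (fun s => p s x) x = lam / 3 * x)
    (hp0 : ∀ y ∈ Set.Icc (0:ℝ) L, p 0 y = 0)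
    (F : ℝ → ℝ → ℝ) (hFdef : ∀ s r : ℝ, F s r = p (L - r) (L - s)) :
    (∀ s r : ℝ, (s, r) ∈ {q : ℝ × ℝ | 0 ≤ q.1 ∧ q.1 ≤ L ∧ q.1 ≤ q.2 ∧ q.2 ≤ L} →
      iteratedDeriv 3 (fun a => F a r) s + iteratedDeriv 3 (fun b => F s b) r
        + deriv (fun a => F a r) s + deriv (fun b => F s b) r = -lam * F s r) ∧
    (∀ s ∈ Set.Icc (0:ℝ) L, F s s = 0) ∧
    (∀ s ∈ Set.Icc (0:ℝ) L, deriv (fun a => F a s) s = lam / 3 * (L - s)) ∧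
    (∀ s ∈ Set.Icc (0:ℝ) L, F s L = 0) := by
  set f := Function.uncurry p with hf
  have hdiff : Differentiable ℝ f := hp.differentiable (by norm_num)
  -- partial derivatives via the full Fréchet derivative
  have hpx : ∀ x y : ℝ, HasDerivAt (fun s => p s y) (fderiv ℝ f (x, y) (1, 0)) x := by
    intro x y
    have hc : HasDerivAt (fun t : ℝ => (t, y)) ((1 : ℝ), (0 : ℝ)) x :=
      HasDerivAt.prodMk (hasDerivAt_id x) (hasDerivAt_const x y)
    exact (hdiff (x, y)).hasFDerivAt.comp_hasDerivAt x hc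
  have hpy : ∀ x y : ℝ, HasDerivAt (fun r => p x r) (fderiv ℝ f (x, y) (0, 1)) y := by
    intro x y
    have hc : HasDerivAt (fun t : ℝ => (x, t)) ((0 : ℝ), (1 : ℝ)) y :=
      HasDerivAt.prodMk (hasDerivAt_const y x) (hasDerivAt_id y)
    exact (hdiff (x, y)).hasFDerivAt.comp_hasDerivAt y hc
  -- on the diagonal the sum of partials vanishes
  have hsum : ∀ x ∈ Set.Icc (0:ℝ) L,
      fderiv ℝ f (x, x) (1, 0) + fderiv ℝ f (x, x) (0, 1) = 0 := by
    intro x hx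
    have hg : HasDerivAt (fun t : ℝ => p t t) (fderiv ℝ f (x, x) (1, 1)) x := by
      have hc : HasDerivAt (fun t : ℝ => (t, t)) ((1 : ℝ), (1 : ℝ)) x :=
        HasDerivAt.prodMk (hasDerivAt_id x) (hasDerivAt_id x)
      exact HasFDerivAt.comp_hasDerivAt (f := fun t : ℝ => (t, t)) x
        (hdiff (x, x)).hasFDerivAt hc
    have h0 : HasDerivWithinAt (fun t : ℝ => p t t) 0 (Set.Icc 0 L) x :=
      (hasDerivWithinAt_const x _ (0 : ℝ)).congr (fun t ht => hpdiag t ht) (hpdiag x hx)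
    have hU : UniqueDiffWithinAt ℝ (Set.Icc (0:ℝ) L) x :=
      (uniqueDiffOn_Icc hL) x hx
    have := hU.eq_deriv _ (hg.hasDerivWithinAt) h0
    calc fderiv ℝ f (x, x) (1, 0) + fderiv ℝ f (x, x) (0, 1)
        = fderiv ℝ f (x, x) ((1, 0) + (0, 1)) := by rw [map_add]
      _ = fderiv ℝ f (x, x) (1, 1) := by norm_num
      _ = 0 := this
  refine ⟨?_, ?_, ?_, ?_⟩
  · intro s r hsr
    obtain ⟨hs0, hsL, hsr', hrL⟩ := hsr
    simp only at hs0 hsL hsr' hrL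
    set x := L - r with hx
    set y := L - s with hy
    have hmem : (x, y) ∈ {q : ℝ × ℝ | 0 ≤ q.1 ∧ q.1 ≤ L ∧ q.1 ≤ q.2 ∧ q.2 ≤ L} := by
      constructor
      · simp only [hx]; linarith
      refine ⟨by simp only [hx]; linarith, by simp only [hx, hy]; linarith,
        by simp only [hy]; linarith⟩
    have hFa : (fun a => F a r) = fun a => (fun b => p x b) (L - a) := by
      funext a; rw [hFdef]
    have hFb : (fun b => F s b) = fun b => (fun a => p a y) (L - b) := by
      funext b; rw [hFdef]
    have h1 : iteratedDeriv 3 (fun a => F a r) s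
        = -iteratedDeriv 3 (fun b => p x b) y := by
      have := itd_const_sub 3 (fun b => p x b) L s
      norm_num at this
      rw [hFa, hy]
      exact this
    have h2 : iteratedDeriv 3 (fun b => F s b) r
        = -iteratedDeriv 3 (fun a => p a y) x := by
      have := itd_const_sub 3 (fun a => p a y) L r
      norm_num at this
      rw [hFb, hx]
      exact this
    have h3 : deriv (fun a => F a r) s = -deriv (fun b => p x b) y := by
      have := deriv_comp_const_sub (fun b => p x b) L s
      rw [hFa]
      simpa using this
    have h4 : deriv (fun b => F s b) r = -deriv (fun a => p a y) x := by
      have := deriv_comp_const_sub (fun a => p a y) L r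
      rw [hFb]
      simpa using this
    have hpde := hppde x y hmem
    rw [h1, h2, h3, h4, hFdef, ← hx, ← hy]
    linarith
  · intro s hs
    rw [hFdef]
    exact hpdiag (L - s) ⟨by linarith [hs.2], by linarith [hs.1]⟩
  · intro s hs
    have hLs : L - s ∈ Set.Icc (0:ℝ) L := ⟨by linarith [hs.2], by linarith [hs.1]⟩
    have hFa : (fun a => F a s) = fun a => (fun b => p (L - s) b) (L - a) := by
      funext a; rw [hFdef]
    have hd : deriv (fun a => F a s) s = -deriv (fun b => p (L - s) b) (L - s) := by
      have := deriv_comp_const_sub (fun b => p (L - s) b) L s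
      rw [hFa]
      simpa using this
    rw [hd]
    have h10 : fderiv ℝ f (L - s, L - s) (1, 0) = lam / 3 * (L - s) := by
      rw [← (hpx (L - s) (L - s)).deriv]
      exact hpxdiag (L - s) hLs
    have h01 := hsum (L - s) hLs
    rw [(hpy (L - s) (L - s)).deriv]
    rw [h10] at h01
    linarith
  · intro s hs
    rw [hFdef]
    have : L - L = 0 := by ring
    rw [this]
    exact hp0 (L - s) ⟨by linarith [hs.2], by linarith [hs.1]⟩
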